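/- Let ℋ be a real Hilbert space and J : ℋ → ℋ a bounded operator with J² = -I (a complex structure). Then ⟨x,y⟩_R := ⟨x, (I + J*J)y⟩ defines an equivalent inner product on ℋ for which J is a unitary with R-adjoint -J, and ω(x,y) := ⟨x, Jy⟩_R is a symplectic form on ℋ. -/

import Mathlib

open RealInnerProductSpace

/-- If J is a complex structure (J² = -I) on a real Hilbert space ℋ, then
⟨x,y⟩_R := ⟨x, (I + J*J)y⟩ is an equivalent inner product for which J is unitary with
R-adjoint -J, and ω(x,y) := ⟨x, Jy⟩_R is a symplectic form on ℋ. -/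
theorem stmt16 {H : Type*} [NormedAddCommGroup H] [InnerProductSpace ℝ H]
    [CompleteSpace H] (J : H →L[ℝ] H)
    (hJ : J.comp J = -ContinuousLinearMap.id ℝ H)
    (innR : H → H → ℝ)
    (hinnR : ∀ x y, innR x y = ⟪x, y + (ContinuousLinearMap.adjoint J) (J y)⟫) :
    (∀ x y, innR x y = innR y x) ∧
    (∀ (a b : ℝ) (x x' y : H), innR (a • x + b • x') y = a * innR x y + b * innR x' y) ∧
    (∃ c > 0, ∃ C > 0, ∀ x, c * ‖x‖ ^ 2 ≤ innR x x ∧ innR x x ≤ C * ‖x‖ ^ 2) ∧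
    (∀ x y, innR (J x) (J y) = innR x y) ∧
    (∀ x y, innR (J x) y = -innR x (J y)) ∧
    ∃ ω : H →L[ℝ] H →L[ℝ] ℝ, (∀ x y, ω x y = innR x (J y)) ∧
      (∀ x y, ω x y = -ω y x) ∧ Function.Bijective ω := by
  have hJJ : ∀ x, J (J x) = -x := by
    intro x
    have := congrFun (congrArg (fun f : H →L[ℝ] H => (f : H → H)) hJ) x
    simpa using this
  -- inner-product reformulation
  have hinn : ∀ x y, innR x y = ⟪x, y⟫ + ⟪J x, J y⟫ := by
    intro x y
    rw [hinnR, inner_add_right, ContinuousLinearMap.adjoint_inner_right]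
  -- symmetry
  have hsymm : ∀ x y, innR x y = innR y x := by
    intro x y
    rw [hinn, hinn, real_inner_comm x y, real_inner_comm (J x) (J y)]
  refine ⟨hsymm, ?_, ?_, ?_, ?_, ?_⟩
  · intro a b x x' y
    simp only [hinn, inner_add_left, map_add, map_smul, real_inner_smul_left]
    ring
  · refine ⟨1, one_pos, ‖J‖ ^ 2 + 1, by positivity, fun x => ?_⟩
    have h1 : innR x x = ‖x‖ ^ 2 + ‖J x‖ ^ 2 := by
      rw [hinn, real_inner_self_eq_norm_sq, real_inner_self_eq_norm_sq]
    have h2 : ‖J x‖ ≤ ‖J‖ * ‖x‖ := J.le_opNorm x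
    have h3 : (0:ℝ) ≤ ‖J x‖ := norm_nonneg _
    have h4 : (0:ℝ) ≤ ‖x‖ := norm_nonneg _
    constructor
    · nlinarith
    · nlinarith
  · intro x y
    rw [hinn, hinn, hJJ x, hJJ y, inner_neg_neg]
    ring
  · intro x y
    rw [hinn, hinn, hJJ x, hJJ y, inner_neg_left, inner_neg_right]
    ring
  · -- the symplectic form
    set T : H →L[ℝ] H := J - ContinuousLinearMap.adjoint J with hT
    have hTapp : ∀ y, T y = J y - ContinuousLinearMap.adjoint J y := fun y => rfl
    have hkey : ∀ x y, innR x (J y) = ⟪x, T y⟫ := by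
      intro x y
      rw [hinn, hTapp, inner_sub_right, hJJ, inner_neg_right,
        ContinuousLinearMap.adjoint_inner_right]
      ring
    have hskew : ∀ x y, ⟪x, T y⟫ = ⟪-T x, y⟫ := by
      intro x y
      rw [hTapp, hTapp, inner_sub_right, inner_neg_left, inner_sub_left,
        ContinuousLinearMap.adjoint_inner_right, ContinuousLinearMap.adjoint_inner_left]
      ring
    -- T is bounded below
    have hlow : ∀ x, ‖x‖ ≤ (‖J‖ + 1) * ‖T x‖ := by
      intro x
      have h1 : ⟪J x, T x⟫ = ‖x‖ ^ 2 + ‖J x‖ ^ 2 := by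
        rw [hTapp, inner_sub_right, ContinuousLinearMap.adjoint_inner_right, hJJ,
          inner_neg_left, real_inner_self_eq_norm_sq, real_inner_self_eq_norm_sq]
        ring
      have h2 : ⟪J x, T x⟫ ≤ ‖J x‖ * ‖T x‖ := real_inner_le_norm _ _
      have h3 : ‖J x‖ ≤ ‖J‖ * ‖x‖ := J.le_opNorm x
      have h4 : (0:ℝ) ≤ ‖x‖ := norm_nonneg _
      have h5 : (0:ℝ) ≤ ‖T x‖ := norm_nonneg _
      have h6 : (0:ℝ) ≤ ‖J x‖ := norm_nonneg _
      rcases eq_or_lt_of_le h4 with h | h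
      · rw [← h]; positivity
      · have h7 : ‖x‖ ^ 2 ≤ (‖J‖ * ‖x‖) * ‖T x‖ := by nlinarith
        nlinarith
    -- T is surjective
    have hsurj : Function.Surjective T := by
      have hanti : AntilipschitzWith (‖J‖ + 1).toNNReal T := by
        apply AddMonoidHomClass.antilipschitz_of_bound
        intro x
        rw [Real.coe_toNNReal _ (by positivity)]
        exact hlow x
      have hclosed : IsClosed ((LinearMap.range (T : H →ₗ[ℝ] H) : Submodule ℝ H) : Set H) :=
        hanti.isClosed_range T.uniformContinuous
      haveI : CompleteSpace (LinearMap.range (T : H →ₗ[ℝ] H)) := hclosed.completeSpace_coe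
      have horth : (LinearMap.range (T : H →ₗ[ℝ] H))ᗮ = ⊥ := by
        rw [Submodule.eq_bot_iff]
        intro x hx
        have h0 : ⟪T (J x), x⟫ = 0 :=
          (Submodule.mem_orthogonal _ x).mp hx (T (J x)) (LinearMap.mem_range_self _ _)
        have h1 : ⟪T (J x), x⟫ = -(‖x‖ ^ 2 + ‖J x‖ ^ 2) := by
          rw [hTapp, inner_sub_left, hJJ, inner_neg_left,
            ContinuousLinearMap.adjoint_inner_left,
            real_inner_self_eq_norm_sq, real_inner_self_eq_norm_sq]
          ring
        have h2 : ‖x‖ ^ 2 + ‖J x‖ ^ 2 = 0 := by rw [h0] at h1; linarith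
        have : ‖x‖ = 0 := by nlinarith [norm_nonneg x, norm_nonneg (J x), sq_nonneg ‖x‖, sq_nonneg ‖J x‖]
        exact norm_eq_zero.mp this
      have htop : LinearMap.range (T : H →ₗ[ℝ] H) = ⊤ := Submodule.orthogonal_eq_bot_iff.mp horth
      intro z
      exact LinearMap.range_eq_top.mp htop z
    -- construct ω
    refine ⟨LinearMap.mkContinuous₂
      (LinearMap.mk₂ ℝ (fun x y => ⟪x, T y⟫)
        (fun x x' y => by simp [inner_add_left])
        (fun a x y => by simp [real_inner_smul_left])
        (fun x y y' => by simp [inner_add_right])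
        (fun a x y => by simp [real_inner_smul_right]))
      ‖T‖ (fun x y => ?_), fun x y => ?_, fun x y => ?_, ?_, ?_⟩
    · simp only [LinearMap.mk₂_apply, Real.norm_eq_abs]
      calc |⟪x, T y⟫| ≤ ‖x‖ * ‖T y‖ := abs_real_inner_le_norm _ _
        _ ≤ ‖x‖ * (‖T‖ * ‖y‖) := by
            have := T.le_opNorm y
            have := norm_nonneg x
            nlinarith
        _ = ‖T‖ * ‖x‖ * ‖y‖ := by ring
    · rw [hkey]; rfl
    · show ⟪x, T y⟫ = -⟪y, T x⟫
      rw [hskew, inner_neg_left, real_inner_comm]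
    · -- injective
      intro x x' hxx'
      have h0 : ∀ y, ⟪x, T y⟫ = ⟪x', T y⟫ := by
        intro y
        exact congrFun (congrArg (fun f : H →L[ℝ] ℝ => (f : H → ℝ)) hxx') y
      have h1 : ∀ y, ⟪x - x', T y⟫ = 0 := by
        intro y
        rw [inner_sub_left, h0 y, sub_self]
      have h2 : ⟪x - x', T (-(J (x - x')))⟫ = 0 := h1 _
      have h3 : innR (x - x') (J (-(J (x - x')))) = 0 := by rw [hkey]; exact h2
      have h4 : J (-(J (x - x'))) = x - x' := by rw [map_neg, hJJ, neg_neg]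
      rw [h4, hinn, real_inner_self_eq_norm_sq, real_inner_self_eq_norm_sq] at h3
      have h5 : ‖x - x'‖ = 0 := by
        nlinarith [norm_nonneg (x - x'), norm_nonneg (J (x - x')), sq_nonneg ‖x - x'‖]
      exact sub_eq_zero.mp (norm_eq_zero.mp h5)
    · -- surjective
      intro f
      obtain ⟨z, hz⟩ := (InnerProductSpace.toDual ℝ H).surjective f
      obtain ⟨x, hx⟩ := hsurj (-z)
      refine ⟨x, ContinuousLinearMap.ext fun y => ?_⟩
      show ⟪x, T y⟫ = f y
      rw [hskew, hx, neg_neg, ← hz]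
      rfl
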